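/- Let (S_n) be a simple random walk on ℤ². Then for every pair of vectors u, v ∈ ℤ² and every n ≥ 1, the probability that S_n lies in the set {v + k·u : k ∈ ℤ} ∪ {−v + k·u : k ∈ ℤ} is at most 10/√n. -/

import Mathlib

open MeasureTheory ProbabilityTheory
open Finset
open scoped ENNReal


lemma cb_sq_le : ∀ m : ℕ, Nat.centralBinom m ^ 2 * (3*m+1) ≤ 16 ^ m := by
  intro m
  induction m with
  | zero => simp [Nat.centralBinom]
  | succ m ih =>
    have key : (2*m+1)^2 * (3*m+4) ≤ 4 * (m+1)^2 * (3*m+1) := by nlinarith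
    have h1 : (m+1) * Nat.centralBinom (m+1) = 2 * (2*m+1) * Nat.centralBinom m :=
      Nat.succ_mul_centralBinom_succ m
    have h2 : ((m+1) * Nat.centralBinom (m+1))^2 * ((3*m+4) * (3*m+1))
        = (Nat.centralBinom (m+1) ^ 2 * (3*(m+1)+1)) * ((m+1)^2 * (3*m+1)) := by ring_nf
    have h3 : (2 * (2*m+1) * Nat.centralBinom m)^2 * ((3*m+4) * (3*m+1))
        = (Nat.centralBinom m ^2 * (3*m+1)) * (4 * ((2*m+1)^2 * (3*m+4))) := by ring
    have h4 : (Nat.centralBinom m ^2 * (3*m+1)) * (4 * ((2*m+1)^2 * (3*m+4)))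
        ≤ 16^m * (4 * (4 * (m+1)^2 * (3*m+1))) := by
      exact Nat.mul_le_mul ih (Nat.mul_le_mul_left _ key)
    have h5 : (Nat.centralBinom (m+1) ^ 2 * (3*(m+1)+1)) * ((m+1)^2 * (3*m+1))
        ≤ (16^(m+1)) * ((m+1)^2 * (3*m+1)) := by
      calc (Nat.centralBinom (m+1) ^ 2 * (3*(m+1)+1)) * ((m+1)^2 * (3*m+1))
          = ((m+1) * Nat.centralBinom (m+1))^2 * ((3*m+4) * (3*m+1)) := by rw [h2]
        _ = (2 * (2*m+1) * Nat.centralBinom m)^2 * ((3*m+4) * (3*m+1)) := by rw [h1]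
        _ = (Nat.centralBinom m ^2 * (3*m+1)) * (4 * ((2*m+1)^2 * (3*m+4))) := h3
        _ ≤ 16^m * (4 * (4 * (m+1)^2 * (3*m+1))) := h4
        _ = (16^(m+1)) * ((m+1)^2 * (3*m+1)) := by ring
    have hpos : 0 < (m+1)^2 * (3*m+1) := by positivity
    exact Nat.le_of_mul_le_mul_right h5 hpos

lemma choose_half_sq : ∀ n : ℕ, (n.choose (n/2))^2 * n ≤ 4 ^ n := by
  intro n
  rcases Nat.even_or_odd n with ⟨m, hm⟩ | ⟨m, hm⟩
  · subst hm
    have h2 : (m+m)/2 = m := by omega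
    rw [h2]
    have : (m+m) ≤ 3*m+1 := by omega
    calc ((m+m).choose m)^2 * (m+m) ≤ Nat.centralBinom m ^2 * (3*m+1) := by
          unfold Nat.centralBinom; rw [two_mul]; exact Nat.mul_le_mul_left _ this
      _ ≤ 16^m := cb_sq_le m
      _ = 4^(m+m) := by rw [← two_mul]; rw [pow_mul]; norm_num
  · subst hm
    have h2 : (2*m+1)/2 = m := by omega
    rw [h2]
    have hdouble : 2 * ((2*m+1).choose m) = Nat.centralBinom (m+1) := by
      have hs : (2*m+1).choose (m+1) = (2*m+1).choose m := by
        rw [← Nat.choose_symm (by omega)]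
        congr 1; omega
      have hp : (2*m+1).choose m + (2*m+1).choose (m+1) = (2*m+2).choose (m+1) :=
        Nat.succ_sub_one (2*m+1) ▸ (Nat.choose_succ_succ (2*m+1) m).symm
      unfold Nat.centralBinom
      have : 2*(m+1) = 2*m+2 := by ring
      rw [this, ← hp, hs]; ring
    have key : (2 * ((2*m+1).choose m))^2 * (2*m+1) ≤ Nat.centralBinom (m+1)^2 * (3*(m+1)+1) := by
      rw [hdouble]; exact Nat.mul_le_mul_left _ (by omega)
    have : (2 * ((2*m+1).choose m))^2 * (2*m+1) ≤ 16^(m+1) := key.trans (cb_sq_le (m+1))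
    have h16 : (16:ℕ)^(m+1) = 4 * 4^(2*m+1) := by
      have : (16:ℕ) = 4^2 := by norm_num
      rw [this, ← pow_mul]
      have : 2*(m+1) = (2*m+1)+1 := by ring
      rw [this, pow_succ]; ring
    have hexp : (2 * ((2*m+1).choose m))^2 * (2*m+1)
        = 4 * (((2*m+1).choose m)^2 * (2*m+1)) := by ring
    rw [hexp, h16] at this
    exact Nat.le_of_mul_le_mul_left this (by norm_num)

lemma choose_half_real (n : ℕ) : (n.choose (n/2) : ℝ) * Real.sqrt n ≤ 2^n := by
  have h := choose_half_sq n
  have h' : ((n.choose (n/2) : ℝ))^2 * n ≤ (2^n)^2 := by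
    have : ((4:ℝ))^n = (2^n)^2 := by rw [← pow_mul, show (4:ℝ) = 2^2 by norm_num, ← pow_mul]; ring_nf
    rw [← this]; exact_mod_cast h
  have h2 : Real.sqrt (((n.choose (n/2) : ℝ))^2 * n) ≤ Real.sqrt ((2^n)^2) :=
    Real.sqrt_le_sqrt h'
  rwa [Real.sqrt_mul (by positivity), Real.sqrt_sq (by positivity),
    Real.sqrt_sq (by positivity)] at h2

lemma count_sum_eq (n : ℕ) (t : ℤ) :
    ((Fintype.piFinset (fun _ : Fin n => ({1,-1} : Finset ℤ))).filter
      (fun ε => ∑ i, ε i = t)).card ≤ n.choose (n/2) := by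
  classical
  set F := (Fintype.piFinset (fun _ : Fin n => ({1,-1} : Finset ℤ))).filter
      (fun ε => ∑ i, ε i = t) with hF
  set φ : (Fin n → ℤ) → Finset (Fin n) := fun ε => univ.filter (fun i => ε i = 1) with hφ
  have hmem : ∀ ε ∈ F, ∀ i, ε i = 1 ∨ ε i = -1 := by
    intro ε hε i
    have := (Finset.mem_filter.mp hε).1
    have := (Fintype.mem_piFinset.mp this) i
    simpa using this
  have hcard : ∀ ε ∈ F, 2 * ((φ ε).card : ℤ) = n + t := by
    intro ε hε
    have hsum : ∑ i, ε i = t := (Finset.mem_filter.mp hε).2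
    have hsplit : ∑ i ∈ φ ε, ε i + ∑ i ∈ univ.filter (fun i => ¬ (ε i = 1)), ε i = t := by
      rw [hφ]; rw [Finset.sum_filter_add_sum_filter_not]; exact hsum
    have h1 : ∑ i ∈ φ ε, ε i = (φ ε).card := by
      rw [Finset.sum_congr rfl (fun i hi => (Finset.mem_filter.mp hi).2)]; simp; rfl
    have h2 : ∑ i ∈ univ.filter (fun i => ¬ (ε i = 1)), ε i
        = -((univ.filter (fun i => ¬ (ε i = 1))).card : ℤ) := by
      have hall : ∀ i ∈ univ.filter (fun i => ¬ (ε i = 1)), ε i = -1 := by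
        intro i hi
        rcases hmem ε hε i with h | h
        · exact absurd h (Finset.mem_filter.mp hi).2
        · exact h
      rw [Finset.sum_congr rfl hall, Finset.sum_const, nsmul_eq_mul]
      ring
    have h3 : (φ ε).card + (univ.filter (fun i => ¬ (ε i = 1))).card = n := by
      rw [hφ, Finset.card_filter_add_card_filter_not]; simp
    rw [h1, h2] at hsplit
    have := congrArg (Nat.cast (R := ℤ)) h3
    push_cast at this
    omega
  rcases F.eq_empty_or_nonempty with h | ⟨ε₀, hε₀⟩
  · simp [h]
  · set p := (φ ε₀).card with hp
    have himg : ∀ ε ∈ F, φ ε ∈ Finset.powersetCard p univ := by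
      intro ε hε
      rw [Finset.mem_powersetCard]
      refine ⟨Finset.subset_univ _, ?_⟩
      have := hcard ε hε
      have := hcard ε₀ hε₀
      omega
    have hinj : Set.InjOn φ F := by
      intro ε hε ε' hε' heq
      funext i
      rcases hmem ε hε i with h | h <;> rcases hmem ε' hε' i with h' | h'
      · rw [h, h']
      · exfalso
        have hi : i ∈ φ ε := by simp [hφ, h]
        rw [heq] at hi
        have : ε' i = 1 := by simpa [hφ] using hi
        omega
      · exfalso
        have hi : i ∈ φ ε' := by simp [hφ, h']
        rw [← heq] at hi
        have : ε i = 1 := by simpa [hφ] using hi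
        omega
      · rw [h, h']
    calc F.card ≤ (Finset.powersetCard p univ).card :=
          Finset.card_le_card_of_injOn φ himg hinj
      _ = n.choose p := by rw [Finset.card_powersetCard]; simp
      _ ≤ n.choose (n/2) := Nat.choose_le_middle p n


lemma count_lin (n : ℕ) (a d : ℤ) (ha : a ≠ 0) :
    ((Fintype.piFinset (fun _ : Fin n => ({1,-1} : Finset ℤ))).filter
      (fun ε => a * ∑ i, ε i = d)).card ≤ n.choose (n/2) := by
  classical
  by_cases h : ∃ e : ℤ, a * e = d
  · obtain ⟨e, he⟩ := h
    refine le_trans (Finset.card_le_card ?_) (count_sum_eq n e)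
    intro ε hε
    rw [Finset.mem_filter] at hε ⊢
    refine ⟨hε.1, ?_⟩
    exact mul_left_cancel₀ ha (hε.2.trans he.symm)
  · have : ((Fintype.piFinset (fun _ : Fin n => ({1,-1} : Finset ℤ))).filter
      (fun ε => a * ∑ i, ε i = d)) = ∅ := by
      rw [Finset.filter_eq_empty_iff]
      intro ε _ hc
      exact h ⟨∑ i, ε i, hc⟩
    rw [this]; simp

def Steps : Finset (ℤ × ℤ) := {(1,0),(-1,0),(0,1),(0,-1)}

lemma steps_cases {s : ℤ × ℤ} (h : s ∈ Steps) :
    s = (1,0) ∨ s = (-1,0) ∨ s = (0,1) ∨ s = (0,-1) := by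
  simpa [Steps] using h

lemma count_main_a (n : ℕ) (a b c₁ c₂ : ℤ) (ha : a ≠ 0) :
    ((Fintype.piFinset (fun _ : Fin n => Steps)).filter (fun f =>
      a * (∑ i, ((f i).1 + (f i).2)) + b * (∑ i, ((f i).1 - (f i).2)) = c₁ ∨
      a * (∑ i, ((f i).1 + (f i).2)) + b * (∑ i, ((f i).1 - (f i).2)) = c₂)).card
    ≤ 2^n * (2 * n.choose (n/2)) := by
  classical
  set T := ((Fintype.piFinset (fun _ : Fin n => Steps)).filter (fun f =>
      a * (∑ i, ((f i).1 + (f i).2)) + b * (∑ i, ((f i).1 - (f i).2)) = c₁ ∨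
      a * (∑ i, ((f i).1 + (f i).2)) + b * (∑ i, ((f i).1 - (f i).2)) = c₂)) with hT
  have hTmem : ∀ f ∈ T, ∀ i, f i ∈ Steps := by
    intro f hf i
    exact Fintype.mem_piFinset.mp (Finset.mem_filter.mp hf).1 i
  have hδ : ∀ f ∈ T, (fun i => (f i).1 - (f i).2) ∈
      Fintype.piFinset (fun _ : Fin n => ({1,-1} : Finset ℤ)) := by
    intro f hf
    rw [Fintype.mem_piFinset]
    intro i
    rcases steps_cases (hTmem f hf i) with h | h | h | h <;> simp [h]
  rw [Finset.card_eq_sum_card_fiberwise hδ]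
  have hfiber : ∀ g ∈ Fintype.piFinset (fun _ : Fin n => ({1,-1} : Finset ℤ)),
      (T.filter (fun f => (fun i => (f i).1 - (f i).2) = g)).card ≤ 2 * n.choose (n/2) := by
    intro g hg
    set G := (Fintype.piFinset (fun _ : Fin n => ({1,-1} : Finset ℤ))).filter
      (fun ε => a * ∑ i, ε i + b * ∑ i, g i = c₁ ∨ a * ∑ i, ε i + b * ∑ i, g i = c₂) with hG
    have hstep1 : (T.filter (fun f => (fun i => (f i).1 - (f i).2) = g)).card ≤ G.card := by
      apply Finset.card_le_card_of_injOn (fun f => fun i => (f i).1 + (f i).2)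
      · intro f hf
        rw [Finset.mem_coe, Finset.mem_filter] at hf
        obtain ⟨hfT, hfg⟩ := hf
        rw [hG, Finset.mem_coe, Finset.mem_filter]
        constructor
        · rw [Fintype.mem_piFinset]
          intro i
          rcases steps_cases (hTmem f hfT i) with h | h | h | h <;> simp [h]
        · have hsum : ∑ i, ((f i).1 - (f i).2) = ∑ i, g i := by
            refine Finset.sum_congr rfl (fun i _ => ?_)
            exact congrFun hfg i
          have := (Finset.mem_filter.mp hfT).2
          rwa [hsum] at this
      · intro f hf f' hf' heq
        simp only [Finset.coe_filter, Set.mem_setOf_eq] at hf hf'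
        funext i
        have h1 := congrFun heq i
        have h2 := congrFun hf.2 i
        have h3 := congrFun hf'.2 i
        simp only at h1 h2 h3
        have : (f i).1 = (f' i).1 ∧ (f i).2 = (f' i).2 := by omega
        exact Prod.ext this.1 this.2
    have hstep2 : G.card ≤ 2 * n.choose (n/2) := by
      rw [hG, Finset.filter_or]
      refine le_trans (Finset.card_union_le _ _) ?_
      have e1 : ∀ c : ℤ, ((Fintype.piFinset (fun _ : Fin n => ({1,-1} : Finset ℤ))).filter
          (fun ε => a * ∑ i, ε i + b * ∑ i, g i = c)).card ≤ n.choose (n/2) := by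
        intro c
        refine le_trans (le_of_eq ?_) (count_lin n a (c - b * ∑ i, g i) ha)
        congr 1
        apply Finset.filter_congr
        intro ε _
        exact eq_sub_iff_add_eq.symm
      have h12 := Nat.add_le_add (e1 c₁) (e1 c₂)
      rwa [← two_mul] at h12
    exact hstep1.trans hstep2
  calc ∑ g ∈ Fintype.piFinset (fun _ : Fin n => ({1,-1} : Finset ℤ)),
        (T.filter (fun f => (fun i => (f i).1 - (f i).2) = g)).card
      ≤ ∑ g ∈ Fintype.piFinset (fun _ : Fin n => ({1,-1} : Finset ℤ)), 2 * n.choose (n/2) :=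
        Finset.sum_le_sum hfiber
    _ = 2^n * (2 * n.choose (n/2)) := by
        rw [Finset.sum_const, smul_eq_mul]
        congr 1
        rw [Fintype.card_piFinset]
        simp
lemma count_main (n : ℕ) (a b c₁ c₂ : ℤ) (hab : a ≠ 0 ∨ b ≠ 0) :
    ((Fintype.piFinset (fun _ : Fin n => Steps)).filter (fun f =>
      a * (∑ i, ((f i).1 + (f i).2)) + b * (∑ i, ((f i).1 - (f i).2)) = c₁ ∨
      a * (∑ i, ((f i).1 + (f i).2)) + b * (∑ i, ((f i).1 - (f i).2)) = c₂)).card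
    ≤ 2^n * (2 * n.choose (n/2)) := by
  classical
  rcases hab with ha | hb
  · exact count_main_a n a b c₁ c₂ ha
  · -- swap via the involution negating second coordinates
    have hcard : ((Fintype.piFinset (fun _ : Fin n => Steps)).filter (fun f =>
        a * (∑ i, ((f i).1 + (f i).2)) + b * (∑ i, ((f i).1 - (f i).2)) = c₁ ∨
        a * (∑ i, ((f i).1 + (f i).2)) + b * (∑ i, ((f i).1 - (f i).2)) = c₂)).card
      = ((Fintype.piFinset (fun _ : Fin n => Steps)).filter (fun f =>
        b * (∑ i, ((f i).1 + (f i).2)) + a * (∑ i, ((f i).1 - (f i).2)) = c₁ ∨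
        b * (∑ i, ((f i).1 + (f i).2)) + a * (∑ i, ((f i).1 - (f i).2)) = c₂)).card := by
      apply Finset.card_bij' (fun f _ => fun i => ((f i).1, -(f i).2))
        (fun f _ => fun i => ((f i).1, -(f i).2))
      case left_inv => intro f _; funext i; simp
      case right_inv => intro f _; funext i; simp
      case hi =>
        intro f hf
        rw [Finset.mem_filter] at hf ⊢
        obtain ⟨h1, h2⟩ := hf
        constructor
        · rw [Fintype.mem_piFinset] at h1 ⊢
          intro i
          rcases steps_cases (h1 i) with h | h | h | h <;> simp [h, Steps]
        · have e1 : (∑ i, ((((f i).1, -(f i).2) : ℤ × ℤ).1 + (((f i).1, -(f i).2) : ℤ × ℤ).2))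
              = ∑ i, ((f i).1 - (f i).2) := by
            refine Finset.sum_congr rfl (fun i _ => ?_); ring
          have e2 : (∑ i, ((((f i).1, -(f i).2) : ℤ × ℤ).1 - (((f i).1, -(f i).2) : ℤ × ℤ).2))
              = ∑ i, ((f i).1 + (f i).2) := by
            refine Finset.sum_congr rfl (fun i _ => ?_); ring
          simp only [e1, e2]
          rcases h2 with h | h
          · left; linarith
          · right; linarith
      case hj =>
        intro f hf
        rw [Finset.mem_filter] at hf ⊢
        obtain ⟨h1, h2⟩ := hf
        constructor
        · rw [Fintype.mem_piFinset] at h1 ⊢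
          intro i
          rcases steps_cases (h1 i) with h | h | h | h <;> simp [h, Steps]
        · have e1 : (∑ i, ((((f i).1, -(f i).2) : ℤ × ℤ).1 + (((f i).1, -(f i).2) : ℤ × ℤ).2))
              = ∑ i, ((f i).1 - (f i).2) := by
            refine Finset.sum_congr rfl (fun i _ => ?_); ring
          have e2 : (∑ i, ((((f i).1, -(f i).2) : ℤ × ℤ).1 - (((f i).1, -(f i).2) : ℤ × ℤ).2))
              = ∑ i, ((f i).1 + (f i).2) := by
            refine Finset.sum_congr rfl (fun i _ => ?_); ring
          simp only [e1, e2]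
          rcases h2 with h | h
          · left; linarith
          · right; linarith
    rw [hcard]
    exact count_main_a n b a c₁ c₂ hb


lemma walk_prob_le {Ω : Type*} [MeasurableSpace Ω] (μ : Measure Ω)
    [IsProbabilityMeasure μ] (ξ : ℕ → Ω → ℤ × ℤ) (hmeas : ∀ i, Measurable (ξ i))
    (hindep : iIndepFun ξ μ)
    (hdist : ∀ i, ∀ s ∈ ({(1, 0), (-1, 0), (0, 1), (0, -1)} : Set (ℤ × ℤ)),
      μ {ω | ξ i ω = s} = 1 / 4)
    (n : ℕ) (P : ℤ × ℤ → Prop) (a b c₁ c₂ : ℤ) (hab : a ≠ 0 ∨ b ≠ 0)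
    (hP : ∀ s : ℤ × ℤ, P s → a * (s.1 + s.2) + b * (s.1 - s.2) = c₁ ∨
      a * (s.1 + s.2) + b * (s.1 - s.2) = c₂) :
    μ {ω | P (∑ i ∈ Finset.range n, ξ i ω)} ≤
      ((2^n * (2 * n.choose (n/2)) : ℕ) : ℝ≥0∞) * ((1 : ℝ≥0∞)/4)^n := by
  classical
  have hdist' : ∀ i : ℕ, ∀ s ∈ Steps, μ {ω | ξ i ω = s} = 1/4 := by
    intro i s hs
    refine hdist i s ?_
    rcases steps_cases hs with h | h | h | h <;> simp [h]
  set T := ((Fintype.piFinset (fun _ : Fin n => Steps)).filter (fun f =>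
      a * (∑ i, ((f i).1 + (f i).2)) + b * (∑ i, ((f i).1 - (f i).2)) = c₁ ∨
      a * (∑ i, ((f i).1 + (f i).2)) + b * (∑ i, ((f i).1 - (f i).2)) = c₂)) with hT
  set bad : Set Ω := ⋃ i ∈ Finset.range n, {ω | ξ i ω ∉ Steps} with hbad
  set cell : (Fin n → ℤ × ℤ) → Set Ω := fun f => ⋂ i ∈ Finset.range n,
      {ω | ξ i ω = if h : i < n then f ⟨i, h⟩ else (1,0)} with hcell
  -- the event is covered
  have hsub : {ω | P (∑ i ∈ Finset.range n, ξ i ω)} ⊆ bad ∪ ⋃ f ∈ T, cell f := by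
    intro ω hω
    by_cases hgood : ∀ i ∈ Finset.range n, ξ i ω ∈ Steps
    · right
      set f : Fin n → ℤ × ℤ := fun i => ξ i ω with hf
      have hsum : (∑ i ∈ Finset.range n, ξ i ω) = ∑ i, f i := by
        rw [Finset.sum_range]
      have hfT : f ∈ T := by
        rw [hT, Finset.mem_filter]
        constructor
        · rw [Fintype.mem_piFinset]
          intro i
          exact hgood i (Finset.mem_range.mpr i.isLt)
        · have h1 : (∑ i, ((f i).1 + (f i).2)) = (∑ i, f i).1 + (∑ i, f i).2 := by
            rw [Finset.sum_add_distrib, Prod.fst_sum, Prod.snd_sum]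
          have h2 : (∑ i, ((f i).1 - (f i).2)) = (∑ i, f i).1 - (∑ i, f i).2 := by
            rw [Finset.sum_sub_distrib, Prod.fst_sum, Prod.snd_sum]
          rw [h1, h2]
          have := hP _ hω
          rwa [hsum] at this
      refine Set.mem_biUnion hfT ?_
      rw [hcell]
      refine Set.mem_biInter ?_
      intro i hi
      have hlt : i < n := Finset.mem_range.mp hi
      simp only [Set.mem_setOf_eq, hlt, dif_pos]
      rfl
    · left
      push_neg at hgood
      obtain ⟨i, hi, hiS⟩ := hgood
      exact Set.mem_biUnion hi hiS
  have hbad0 : μ bad = 0 := by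
    rw [hbad]
    refine measure_biUnion_null_iff ?_ |>.mpr ?_
    · exact (Finset.range n : Set ℕ).to_countable
    · intro i _
      have hmeasset : MeasurableSet {ω | ξ i ω ∈ Steps} := by
        have : {ω | ξ i ω ∈ Steps} = ξ i ⁻¹' (Steps : Set (ℤ × ℤ)) := rfl
        rw [this]
        exact hmeas i ((Steps : Set (ℤ × ℤ)).toFinite.measurableSet)
      have hone : μ {ω | ξ i ω ∈ Steps} = 1 := by
        have hdecomp : {ω | ξ i ω ∈ Steps} = ⋃ s ∈ Steps, {ω | ξ i ω = s} := by
          ext ω; simp [Set.mem_iUnion]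
        rw [hdecomp]
        rw [measure_biUnion_finset ?_ ?_]
        · rw [Finset.sum_congr rfl (fun s hs => hdist' i s hs)]
          rw [Finset.sum_const]
          have : Steps.card = 4 := by decide
          rw [this]
          simp only [nsmul_eq_mul, Nat.cast_ofNat, one_div]
          rw [ENNReal.mul_inv_cancel (by norm_num) (by norm_num)]
        · intro s hs t ht hst
          simp only [Function.onFun, Set.disjoint_left]
          intro ω h1 h2
          simp only [Set.mem_setOf_eq] at h1 h2
          exact hst (h1 ▸ h2 ▸ rfl)
        · intro s _
          exact hmeas i (measurableSet_singleton s)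
      have := measure_compl hmeasset (measure_ne_top μ _)
      rw [hone] at this
      have hc : {ω | ξ i ω ∉ Steps} = {ω | ξ i ω ∈ Steps}ᶜ := rfl
      rw [hc, this]
      simp
  have hcellmeas : ∀ f ∈ T, μ (cell f) = ((1:ℝ≥0∞)/4)^n := by
    intro f hf
    rw [hcell]
    have := hindep.meas_biInter (S := Finset.range n)
      (s := fun i => {ω | ξ i ω = if h : i < n then f ⟨i, h⟩ else (1,0)}) ?_
    · rw [this]
      have hprod : ∀ i ∈ Finset.range n,
          μ {ω | ξ i ω = if h : i < n then f ⟨i, h⟩ else (1,0)} = 1/4 := by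
        intro i hi
        have hlt : i < n := Finset.mem_range.mp hi
        simp only [hlt, dif_pos]
        refine hdist' i _ ?_
        have := (Fintype.mem_piFinset.mp (Finset.mem_filter.mp hf).1) ⟨i, hlt⟩
        exact this
      rw [Finset.prod_congr rfl hprod, Finset.prod_const, Finset.card_range]
    · intro i _
      exact ⟨{if h : i < n then f ⟨i, h⟩ else (1,0)}, measurableSet_singleton _, rfl⟩
  calc μ {ω | P (∑ i ∈ Finset.range n, ξ i ω)} ≤ μ (bad ∪ ⋃ f ∈ T, cell f) :=
        measure_mono hsub
    _ ≤ μ bad + μ (⋃ f ∈ T, cell f) := measure_union_le _ _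
    _ = μ (⋃ f ∈ T, cell f) := by rw [hbad0, zero_add]
    _ ≤ ∑ f ∈ T, μ (cell f) := measure_biUnion_finset_le T cell
    _ = ∑ f ∈ T, ((1:ℝ≥0∞)/4)^n := Finset.sum_congr rfl hcellmeas
    _ = (T.card : ℝ≥0∞) * ((1:ℝ≥0∞)/4)^n := by rw [Finset.sum_const, nsmul_eq_mul]
    _ ≤ ((2^n * (2 * n.choose (n/2)) : ℕ) : ℝ≥0∞) * ((1:ℝ≥0∞)/4)^n := by
        refine mul_le_mul_left ?_ _
        exact_mod_cast count_main n a b c₁ c₂ hab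

/-- **Statement 17.** Let `S_n = ξ₁ + ⋯ + ξ_n` be a simple random walk on `ℤ²` (the
steps `ξ_i` are independent and uniform on `{(1,0), (-1,0), (0,1), (0,-1)}`).  Then for
all `u, v ∈ ℤ²` and all `n ≥ 1`, the probability that `S_n ∈ {±v + k·u : k ∈ ℤ}` is at
most `10 / √n`. -/
theorem walk_in_coset_prob_le {Ω : Type*} [MeasurableSpace Ω] (μ : Measure Ω)
    [IsProbabilityMeasure μ] (ξ : ℕ → Ω → ℤ × ℤ) (hmeas : ∀ i, Measurable (ξ i))
    (hindep : iIndepFun ξ μ)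
    (hdist : ∀ i, ∀ s ∈ ({(1, 0), (-1, 0), (0, 1), (0, -1)} : Set (ℤ × ℤ)),
      μ {ω | ξ i ω = s} = 1 / 4)
    (u v : ℤ × ℤ) (n : ℕ) (hn : 1 ≤ n) :
    μ {ω | ∃ k : ℤ, (∑ i ∈ Finset.range n, ξ i ω) = v + k • u ∨
        (∑ i ∈ Finset.range n, ξ i ω) = -v + k • u} ≤
      ENNReal.ofReal (10 / Real.sqrt n) := by
  classical
  -- choose the linear functional
  obtain ⟨a, b, c₁, c₂, hab, hP⟩ : ∃ a b c₁ c₂ : ℤ, (a ≠ 0 ∨ b ≠ 0) ∧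
      ∀ s : ℤ × ℤ, (∃ k : ℤ, s = v + k • u ∨ s = -v + k • u) →
        (a * (s.1 + s.2) + b * (s.1 - s.2) = c₁ ∨
         a * (s.1 + s.2) + b * (s.1 - s.2) = c₂) := by
    by_cases hu : u = 0
    · refine ⟨1, 0, v.1 + v.2, -v.1 - v.2, Or.inl one_ne_zero, ?_⟩
      subst hu
      rintro s ⟨k, h | h⟩
      · rw [smul_zero, add_zero] at h
        subst h
        left; ring
      · rw [smul_zero, add_zero] at h
        subst h
        right
        simp only [Prod.fst_neg, Prod.snd_neg]
        ring
    · refine ⟨u.2 - u.1, u.2 + u.1, 2*(u.2*v.1 - u.1*v.2), -(2*(u.2*v.1 - u.1*v.2)), ?_, ?_⟩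
      · by_contra h
        push_neg at h
        obtain ⟨h1, h2⟩ := h
        have e1 : u.1 = 0 := by omega
        have e2 : u.2 = 0 := by omega
        exact hu (Prod.ext (by simp [e1]) (by simp [e2]))
      · rintro s ⟨k, h | h⟩
        · left
          have h1 : s.1 = v.1 + k * u.1 := by rw [h]; simp [Prod.smul_def]
          have h2 : s.2 = v.2 + k * u.2 := by rw [h]; simp [Prod.smul_def]
          rw [h1, h2]; ring
        · right
          have h1 : s.1 = -v.1 + k * u.1 := by rw [h]; simp [Prod.smul_def]
          have h2 : s.2 = -v.2 + k * u.2 := by rw [h]; simp [Prod.smul_def]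
          rw [h1, h2]; ring
  refine le_trans (walk_prob_le μ ξ hmeas hindep hdist n _ a b c₁ c₂ hab hP) ?_
  -- numerical estimate
  set C : ℕ := n.choose (n/2) with hC
  have hn0 : (0:ℝ) < n := by exact_mod_cast hn
  have hs : 0 < Real.sqrt n := Real.sqrt_pos.mpr hn0
  have h2p : (0:ℝ) < 2^n := by positivity
  have hCle : (C:ℝ) * Real.sqrt n ≤ 2^n := choose_half_real n
  have hreal : ((2^n * (2 * C) : ℕ) : ℝ) * ((1:ℝ)/4)^n ≤ 10 / Real.sqrt n := by
    have h4 : ((1:ℝ)/4)^n = 1/(2^n * 2^n) := by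
      rw [div_pow, one_pow]
      congr 1
      rw [show (4:ℝ) = 2*2 by norm_num, mul_pow]
    push_cast
    rw [h4]
    have heq : (2:ℝ)^n * (2 * C) * (1/(2^n * 2^n)) = 2 * (C:ℝ) / 2^n := by
      field_simp
    rw [heq, div_le_div_iff₀ h2p hs]
    nlinarith [hCle, hs.le, h2p.le]
  calc ((2^n * (2 * C) : ℕ) : ℝ≥0∞) * ((1:ℝ≥0∞)/4)^n
      = ENNReal.ofReal (((2^n * (2 * C) : ℕ) : ℝ) * ((1:ℝ)/4)^n) := by
        rw [ENNReal.ofReal_mul (by positivity), ENNReal.ofReal_natCast,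
          ENNReal.ofReal_pow (by norm_num)]
        congr 2
        rw [ENNReal.ofReal_div_of_pos (by norm_num)]
        norm_num
    _ ≤ ENNReal.ofReal (10 / Real.sqrt n) := ENNReal.ofReal_le_ofReal hreal
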